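/- In a semigroup with zero, the natural conjugacy class of 0 is {0}: if a ∼ₙ 0 then a = 0. -/

import Mathlib

theorem nconj_zero {S : Type*} [SemigroupWithZero S] (a : S)
    (hconj : ∃ g h : WithOne S, (a : WithOne S) * g = g * (0 : S) ∧
      ((0 : S) : WithOne S) * h = h * a ∧
      h * a * g = ((0 : S) : WithOne S) ∧ g * (0 : S) * h = (a : WithOne S)) :
    a = 0 := by
  obtain ⟨g, h, -, -, -, h4⟩ := hconj
  have hg : g * ((0 : S) : WithOne S) = ((0 : S) : WithOne S) := by
    induction g using WithOne.recOneCoe with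
    | one => rw [one_mul]
    | coe x => rw [← WithOne.coe_mul, mul_zero]
  have hh : ((0 : S) : WithOne S) * h = ((0 : S) : WithOne S) := by
    induction h using WithOne.recOneCoe with
    | one => rw [mul_one]
    | coe x => rw [← WithOne.coe_mul, zero_mul]
  rw [hg, hh] at h4
  exact (WithOne.coe_inj.mp h4).symm
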